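/- There exists a natural number N such that for all natural numbers n ≥ N and all real φ with 1 ≤ φ < log n / log log n, setting m = ⌈(12/φ)·n^{1/φ}·ln n⌉ and k = 24·⌈n^{1/φ}⌉ + 1, one has exp(−(m/2)·exp(−(2m−2)/(k−1))) ≤ 1/(2·n^{1/φ}). (Upper-endpoint evaluation in the proof of Lemma 1.) -/

import Mathlib

/-- upper-endpoint evaluation in the proof of Lemma 1.
For all sufficiently large `n` and all real `1 ≤ φ < log n / log log n`
(logs base 2), with `m = ⌈(12/φ)·n^(1/φ)·ln n⌉` and `k = 24·⌈n^(1/φ)⌉ + 1`,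
one has `exp(−(m/2)·exp(−(2m−2)/(k−1))) ≤ 1/(2·n^(1/φ))`. -/
theorem upper_endpoint_eval :
    ∃ N : ℕ, ∀ n : ℕ, N ≤ n → ∀ φ : ℝ, 1 ≤ φ →
      φ < Real.logb 2 n / Real.logb 2 (Real.logb 2 n) →
      ∀ m k : ℝ, m = (⌈12 / φ * (n : ℝ) ^ (1 / φ) * Real.log n⌉₊ : ℝ) →
        k = 24 * (⌈(n : ℝ) ^ (1 / φ)⌉₊ : ℝ) + 1 →
        Real.exp (-(m / 2) * Real.exp (-(2 * m - 2) / (k - 1))) ≤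
          1 / (2 * (n : ℝ) ^ (1 / φ)) := by
  refine ⟨16, fun n hn φ hφ1 hφ2 m k hm hk => ?_⟩
  have hn16 : (16:ℝ) ≤ n := by exact_mod_cast hn
  have hnpos : (0:ℝ) < n := by linarith
  have hn1 : (1:ℝ) < n := by linarith
  have hφ0 : (0:ℝ) < φ := lt_of_lt_of_le one_pos hφ1
  set x : ℝ := (n:ℝ) ^ (1/φ) with hxdef
  have hxpos : 0 < x := Real.rpow_pos_of_pos hnpos _
  have h16 : Real.logb 2 16 = 4 := by
    rw [show (16:ℝ) = 2^(4:ℕ) by norm_num, Real.logb_pow, Real.logb_self_eq_one (by norm_num)]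
    norm_num
  have hL4 : (4:ℝ) ≤ Real.logb 2 n := by
    rw [← h16]
    exact Real.logb_le_logb_of_le (by norm_num) (by norm_num) hn16
  have hlogn : 0 < Real.log n := Real.log_pos hn1
  have hlogL : 0 < Real.log (Real.logb 2 n) := Real.log_pos (by linarith)
  have hlog2 : 0 < Real.log 2 := Real.log_pos (by norm_num)
  -- from hφ2 : φ < log n / log L
  have hLLpos : 0 < Real.logb 2 (Real.logb 2 n) := Real.logb_pos (by norm_num) (by linarith)
  have hφ2'' : φ * Real.logb 2 (Real.logb 2 n) < Real.logb 2 n := (lt_div_iff₀ hLLpos).mp hφ2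
  have hφ2' : φ * Real.log (Real.logb 2 n) < Real.log n := by
    have h3 := mul_lt_mul_of_pos_right hφ2'' hlog2
    simp only [Real.logb] at h3
    rw [mul_assoc, div_mul_cancel₀ _ hlog2.ne', div_mul_cancel₀ _ hlog2.ne'] at h3
    simpa [Real.logb] using h3
  have hkey : Real.logb n (Real.logb 2 n) < 1/φ := by
    rw [Real.logb, div_lt_div_iff₀ hlogn hφ0]
    linarith
  have hxL : Real.logb 2 n < x := by
    have := (Real.rpow_lt_rpow_left_iff hn1).mpr hkey
    rwa [Real.rpow_logb hnpos (by linarith) (by linarith)] at this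
  have hx2 : (2:ℝ) ≤ x := by linarith
  have hlnx : Real.log 2 ≤ Real.log x := Real.log_le_log (by norm_num) hx2
  have hlogxpos : 0 < Real.log x := lt_of_lt_of_le hlog2 hlnx
  have hlogx_eq : Real.log x = (1/φ) * Real.log n := Real.log_rpow hnpos _
  have harg : 12 / φ * x * Real.log n = 12 * (x * Real.log x) := by
    rw [hlogx_eq]; field_simp
  have hm_lb : 12 * (x * Real.log x) ≤ m := by
    rw [hm, ← harg]; exact Nat.le_ceil _
  have hm_ub : m ≤ 12 * (x * Real.log x) + 1 := by
    rw [hm, ← harg]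
    have := Nat.ceil_lt_add_one (by positivity : (0:ℝ) ≤ 12 / φ * x * Real.log n)
    linarith
  have hkx : 24 * x ≤ k - 1 := by
    rw [hk]
    have := Nat.le_ceil x
    linarith
  have hk1pos : 0 < k - 1 := by linarith
  have hdiv : (2*m - 2)/(k-1) ≤ Real.log x := by
    rw [div_le_iff₀ hk1pos]
    nlinarith [mul_le_mul_of_nonneg_left hkx hlogxpos.le]
  have hE : x⁻¹ ≤ Real.exp (-(2*m - 2)/(k-1)) := by
    calc x⁻¹ = Real.exp (-Real.log x) := by rw [Real.exp_neg, Real.exp_log hxpos]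
    _ ≤ _ := by
        apply Real.exp_le_exp.2
        rw [neg_div]
        exact neg_le_neg hdiv
  have h1 : 6 * Real.log x ≤ (m/2) * Real.exp (-(2*m - 2)/(k-1)) := by
    have e1 : 6 * Real.log x = (6 * (x * Real.log x)) * x⁻¹ := by
      field_simp
    rw [e1]
    apply mul_le_mul (by linarith) hE (inv_nonneg.2 hxpos.le)
    nlinarith [mul_pos hxpos hlogxpos]
  have h2 : Real.log (2*x) = Real.log 2 + Real.log x :=
    Real.log_mul (by norm_num) (ne_of_gt hxpos)
  have hgoal2 : Real.log (2*x) ≤ (m/2) * Real.exp (-(2*m - 2)/(k-1)) := by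
    linarith [h1, hlnx, hlogxpos, h2]
  calc Real.exp (-(m / 2) * Real.exp (-(2 * m - 2) / (k - 1)))
      ≤ Real.exp (-Real.log (2*x)) := by
        apply Real.exp_le_exp.2
        linarith [hgoal2]
    _ = 1/(2*x) := by rw [Real.exp_neg, Real.exp_log (by positivity), one_div]
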